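/- Let (I, J) be an ideal cotorsion pair in a triangulated category T, and let j^* : T ⥤ T'', j_! , j_* : T'' ⥤ T be triangulated functors with adjunctions (j_!, j^*), (j^*, j_*) commuting with shifts, such that j_! j^*(I) ⊆ I. Then the image ideals j^*(I) and j^*(J) are orthogonal in T'': for every α'' ∈ j^*(I), every phantom φ'' in T'', and every β'' ∈ j^*(J), the composite β''[1] ∘ φ'' ∘ α'' vanishes, where the phantom ideal of T'' is taken to be all of the relevant obstruction morphisms (class of all triangles). -/
import Mathlib


open CategoryTheory Category Limits Pretriangulated

/-- A class of morphisms in a category. -/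
abbrev MorphismClass (C : Type*) [Category C] := ∀ ⦃X Y : C⦄, (X ⟶ Y) → Prop

/-- An ideal of a preadditive category: an additive subgroup of each Hom-group, closed
under arbitrary pre- and post-composition. -/
structure CatIdeal (C : Type*) [Category C] [Preadditive C] where
  mem : MorphismClass C
  zero_mem : ∀ (X Y : C), mem (0 : X ⟶ Y)
  neg_mem : ∀ ⦃X Y : C⦄ ⦃f : X ⟶ Y⦄, mem f → mem (-f)
  add_mem : ∀ ⦃X Y : C⦄ ⦃f g : X ⟶ Y⦄, mem f → mem g → mem (f + g)
  comp_mem : ∀ ⦃W X Y Z : C⦄ (h : W ⟶ X) ⦃f : X ⟶ Y⦄ (k : Y ⟶ Z),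
    mem f → mem (h ≫ f ≫ k)

/-- The image ideal `F(I)`: all morphisms of the form `g ≫ F(α) ≫ h` with `α ∈ I`. -/
def imageMem {C D : Type*} [Category C] [Category D] (F : C ⥤ D)
    (I : MorphismClass C) : MorphismClass D :=
  fun A B f => ∃ (X Y : C) (α : X ⟶ Y) (g : A ⟶ F.obj X) (h : F.obj Y ⟶ B),
    I α ∧ f = g ≫ F.map α ≫ h

/-- The right orthogonal of `I` with respect to the phantom ideal `Φ`:
`β : A ⟶ B` lies in `I^⊥` iff `α ≫ φ ≫ β⟦1⟧ = 0` for all `α ∈ I` and all `φ ∈ Φ`. -/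
def rOrth {C : Type*} [Category C] [Preadditive C] [HasShift C ℤ]
    (Φ I : MorphismClass C) : MorphismClass C :=
  fun A B β => ∀ ⦃X Y : C⦄ (α : X ⟶ Y), I α → ∀ (φ : Y ⟶ A⟦(1 : ℤ)⟧), Φ φ →
    α ≫ φ ≫ β⟦(1 : ℤ)⟧' = 0

/-- The left orthogonal of `J` with respect to the phantom ideal `Φ`:
`α : X ⟶ Y` lies in `^⊥J` iff `α ≫ φ ≫ β⟦1⟧ = 0` for all `β ∈ J` and all `φ ∈ Φ`. -/
def lOrth {C : Type*} [Category C] [Preadditive C] [HasShift C ℤ]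
    (Φ J : MorphismClass C) : MorphismClass C :=
  fun X Y α => ∀ ⦃A B : C⦄ (β : A ⟶ B), J β → ∀ (φ : Y ⟶ A⟦(1 : ℤ)⟧), Φ φ →
    α ≫ φ ≫ β⟦(1 : ℤ)⟧' = 0

/-- The class of all morphisms. -/
def allMor (C : Type*) [Category C] : MorphismClass C := fun _ _ _ => True

open ZeroObject in
/-- The middle functor of a double adjunction preserves zero morphisms. -/
theorem midMapZero {C D : Type*} [Category C] [Category D]
    [HasZeroObject C] [HasZeroObject D]
    [Limits.HasZeroMorphisms C] [Limits.HasZeroMorphisms D]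
    (G : C ⥤ D) (H : D ⥤ C) (adj₂ : G ⊣ H) {X Y : C} :
    G.map (0 : X ⟶ Y) = 0 := by
  have hz : Limits.IsZero (G.obj (0 : C)) := by
    rw [Limits.IsZero.iff_id_eq_zero]
    apply (adj₂.homEquiv _ _).injective
    exact (Limits.isZero_zero C).eq_of_src _ _
  have h0 : (0 : X ⟶ Y) = (0 : X ⟶ 0) ≫ (0 : (0 : C) ⟶ Y) := by simp
  rw [h0, G.map_comp, hz.eq_zero_of_src (G.map (0 : (0 : C) ⟶ Y)), comp_zero]

/-- Orthogonality transport: if `(I, J)` is an ideal cotorsion pair in `T` with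
`j_! j^*(I) ⊆ I`, then the image ideals `j^*(I)` and `j^*(J)` are orthogonal in `T''`
(phantom ideal = all morphisms). -/
theorem stmt9 {T T'' : Type*} [Category T] [Category T'']
    [HasZeroObject T] [HasZeroObject T''] [Preadditive T] [Preadditive T'']
    [HasShift T ℤ] [HasShift T'' ℤ]
    [∀ n : ℤ, (shiftFunctor T n).Additive] [∀ n : ℤ, (shiftFunctor T'' n).Additive]
    [Pretriangulated T] [Pretriangulated T'']
    (jShriek : T'' ⥤ T) (jUpper : T ⥤ T'') (jStar : T'' ⥤ T)
    [jShriek.CommShift ℤ] [jUpper.CommShift ℤ] [jStar.CommShift ℤ]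
    (adj₁ : jShriek ⊣ jUpper) (adj₂ : jUpper ⊣ jStar)
    (I J : CatIdeal T)
    (hJ : ∀ ⦃A B : T⦄ (β : A ⟶ B), J.mem β ↔ rOrth (allMor T) I.mem β)
    (hI : ∀ ⦃X Y : T⦄ (α : X ⟶ Y), I.mem α ↔ lOrth (allMor T) J.mem α)
    (hstab : ∀ ⦃X Y : T⦄ (f : X ⟶ Y), imageMem (jUpper ⋙ jShriek) I.mem f → I.mem f) :
    ∀ ⦃X Y : T''⦄ (α'' : X ⟶ Y), imageMem jUpper I.mem α'' →
      ∀ ⦃A B : T''⦄ (β'' : A ⟶ B), imageMem jUpper J.mem β'' →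
        ∀ (φ'' : Y ⟶ A⟦(1 : ℤ)⟧), α'' ≫ φ'' ≫ β''⟦(1 : ℤ)⟧' = 0 := by
  rintro X Y α'' ⟨X₀, Y₀, α, g, h, hα, rfl⟩ A B β'' ⟨A₀, B₀, β, g', h', hβ, rfl⟩ φ''
  -- shift the factorization of β''
  have hβshift : (g' ≫ jUpper.map β ≫ h')⟦(1 : ℤ)⟧' =
      g'⟦(1 : ℤ)⟧' ≫ ((jUpper.commShiftIso (1 : ℤ)).inv.app A₀ ≫
        jUpper.map (β⟦(1 : ℤ)⟧') ≫ (jUpper.commShiftIso (1 : ℤ)).hom.app B₀) ≫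
        h'⟦(1 : ℤ)⟧' := by
    have := (jUpper.commShiftIso (1 : ℤ)).hom.naturality β
    dsimp at this
    rw [Functor.map_comp, Functor.map_comp]
    congr 1
    rw [← cancel_epi ((jUpper.commShiftIso (1 : ℤ)).hom.app A₀)]
    simp only [← assoc]
    rw [Iso.hom_inv_id_app]
    simp [this]
  -- the key middle morphism in T''
  set ψ : jUpper.obj Y₀ ⟶ jUpper.obj (A₀⟦(1 : ℤ)⟧) :=
    h ≫ φ'' ≫ g'⟦(1 : ℤ)⟧' ≫ (jUpper.commShiftIso (1 : ℤ)).inv.app A₀ with hψ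
  -- the key vanishing in T''
  have key : jUpper.map α ≫ ψ ≫ jUpper.map (β⟦(1 : ℤ)⟧') = 0 := by
    have hα₁ : I.mem ((jUpper ⋙ jShriek).map α) := by
      apply hstab
      exact ⟨X₀, Y₀, α, 𝟙 _, 𝟙 _, hα, by simp⟩
    have hlo := (hI ((jUpper ⋙ jShriek).map α)).mp hα₁
    have hv : (jUpper ⋙ jShriek).map α ≫
        ((adj₁.homEquiv _ _).symm ψ) ≫ β⟦(1 : ℤ)⟧' = 0 :=
      hlo β hβ ((adj₁.homEquiv _ _).symm ψ) trivial
    have hs : (adj₁.homEquiv _ _).symm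
        (jUpper.map α ≫ ψ ≫ jUpper.map (β⟦(1 : ℤ)⟧')) = 0 := by
      rw [Adjunction.homEquiv_naturality_left_symm,
        Adjunction.homEquiv_naturality_right_symm]
      exact hv
    have hK : jUpper.map α ≫ ψ ≫ jUpper.map (β⟦(1 : ℤ)⟧') =
        adj₁.homEquiv _ _ (0 : jShriek.obj (jUpper.obj X₀) ⟶ B₀⟦(1 : ℤ)⟧) := by
      conv_lhs => rw [← Equiv.apply_symm_apply (adj₁.homEquiv _ _)
        (jUpper.map α ≫ ψ ≫ jUpper.map (β⟦(1 : ℤ)⟧')), hs]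
    rw [hK, Adjunction.homEquiv_apply, midMapZero jUpper jStar adj₂, comp_zero]
  calc (g ≫ jUpper.map α ≫ h) ≫ φ'' ≫ (g' ≫ jUpper.map β ≫ h')⟦(1 : ℤ)⟧'
      = g ≫ (jUpper.map α ≫ ψ ≫ jUpper.map (β⟦(1 : ℤ)⟧')) ≫
          (jUpper.commShiftIso (1 : ℤ)).hom.app B₀ ≫ h'⟦(1 : ℤ)⟧' := by
        rw [hβshift, hψ]; simp only [assoc]
    _ = 0 := by rw [key]; simp
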